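/- Let f : ℝ → ℝ be bounded and regulated, and satisfy the no-jamming condition. Define f⁺(y) = max{f(y),0} and f⁻(y) = min{f(y),0}, and let R⁻ = {x ∈ ℝ : ∫_{x−ε}^{x} 1/f⁻(y) dy > −∞ for some ε > 0} and R⁺ = {x ∈ ℝ : ∫_{x}^{x+ε} 1/f⁺(y) dy < +∞ for some ε > 0}. Then the set Ω* = R⁻ ∩ R⁺ consists of isolated points: every x ∈ Ω* has a neighborhood containing no other point of Ω*. Consequently Ω* is at most countable. -/

import Mathlib

open MeasureTheory Set Filter

/-- `f` is regulated with left limits `fl` and right limits `fr`. -/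
def Regulated (f fl fr : ℝ → ℝ) : Prop :=
  ∀ y : ℝ,
    Filter.Tendsto f (nhdsWithin y (Set.Iio y)) (nhds (fl y)) ∧
    Filter.Tendsto f (nhdsWithin y (Set.Ioi y)) (nhds (fr y))

/-- The no-jamming condition: if `f(y−)·f(y+) = 0` or `f(y−) > 0 > f(y+)`, then `f(y) = 0`. -/
def NoJamming (f fl fr : ℝ → ℝ) : Prop :=
  ∀ y : ℝ, (fl y * fr y = 0 ∨ (0 < fl y ∧ fr y < 0)) → f y = 0

/-- The set `R⁻` of points from which a strictly decreasing solution can start: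
`∫_{x−ε}^{x} 1/f⁻(y) dy > −∞` for some `ε > 0`, where `1/f⁻ = −∞` on `{f⁻ = 0}`. -/
def Rminus (f : ℝ → ℝ) : Set ℝ :=
  {x : ℝ | ∃ ε : ℝ, 0 < ε ∧
    ∫⁻ y in Set.Ico (x - ε) x, (ENNReal.ofReal (max (-(f y)) 0))⁻¹ < ⊤}

/-- The set `R⁺` of points from which a strictly increasing solution can start:
`∫_{x}^{x+ε} 1/f⁺(y) dy < +∞` for some `ε > 0`, where `1/f⁺ = +∞` on `{f⁺ = 0}`. -/
def Rplus (f : ℝ → ℝ) : Set ℝ :=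
  {x : ℝ | ∃ ε : ℝ, 0 < ε ∧
    ∫⁻ y in Set.Ioc x (x + ε), (ENNReal.ofReal (max (f y) 0))⁻¹ < ⊤}

open Topology

-- A set of reals all of whose points are isolated is countable.
lemma countable_isolated (S : Set ℝ)
    (h : ∀ x ∈ S, ∃ ε : ℝ, 0 < ε ∧ ∀ y ∈ S, |y - x| < ε → y = x) : S.Countable := by
  have : ∀ x : S, ∃ q : ℚ × ℚ, (q.1 : ℝ) < x ∧ (x : ℝ) < q.2 ∧
      ∀ y ∈ S, (q.1 : ℝ) < y → y < q.2 → y = x := by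
    rintro ⟨x, hx⟩
    obtain ⟨ε, hε, hiso⟩ := h x hx
    obtain ⟨q1, hq1, hq1'⟩ := exists_rat_btwn (show x - ε < x by linarith)
    obtain ⟨q2, hq2, hq2'⟩ := exists_rat_btwn (show x < x + ε by linarith)
    exact ⟨(q1, q2), hq1', hq2, fun y hy h1 h2 => hiso y hy (abs_sub_lt_iff.2 ⟨by linarith, by linarith⟩)⟩
  choose g hg1 hg2 hg3 using this
  have hinj : Function.Injective g := by
    intro a b hab
    have := hg3 a b.1 b.2 (hab ▸ hg1 b) (hab ▸ hg2 b)
    exact Subtype.ext this.symm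
  have : Countable S := ⟨(Countable.exists_injective_nat (ℚ × ℚ)).elim
    fun i hi => ⟨_, hi.comp hinj⟩⟩
  exact S.to_countable


lemma lim_close {f : ℝ → ℝ} {F : Filter ℝ} [F.NeBot] {L v c : ℝ}
    (hT : Tendsto f F (𝓝 L)) (hs : ∀ᶠ w in F, |f w - v| ≤ c) : |L - v| ≤ c := by
  have hcl : IsClosed {w : ℝ | |w - v| ≤ c} :=
    isClosed_le (by fun_prop) continuous_const
  exact hcl.mem_of_tendsto hT hs

lemma jump_small (f fl fr : ℝ → ℝ) (hreg : Regulated f fl fr) (c : ℝ) (hc : 0 < c)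
    (y0 : ℝ) : ∃ δ : ℝ, 0 < δ ∧ ∀ z, z ≠ y0 → |z - y0| < δ →
      |f z - fl z| ≤ 2 * c ∧ |f z - fr z| ≤ 2 * c := by
  have hL : f ⁻¹' Metric.ball (fl y0) c ∈ 𝓝[<] y0 :=
    (hreg y0).1 (Metric.ball_mem_nhds _ hc)
  have hR : f ⁻¹' Metric.ball (fr y0) c ∈ 𝓝[>] y0 :=
    (hreg y0).2 (Metric.ball_mem_nhds _ hc)
  obtain ⟨l, hl, hlsub⟩ := mem_nhdsLT_iff_exists_Ioo_subset.1 hL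
  obtain ⟨u, hu, husub⟩ := mem_nhdsGT_iff_exists_Ioo_subset.1 hR
  simp only [mem_Iio, mem_Ioi] at hl hu
  have hLc : ∀ w ∈ Set.Ioo l y0, |f w - fl y0| ≤ c := by
    intro w hw
    have := hlsub hw
    simp only [mem_preimage, Metric.mem_ball, Real.dist_eq] at this
    exact this.le
  have hRc : ∀ w ∈ Set.Ioo y0 u, |f w - fr y0| ≤ c := by
    intro w hw
    have := husub hw
    simp only [mem_preimage, Metric.mem_ball, Real.dist_eq] at this
    exact this.le
  refine ⟨min (y0 - l) (u - y0), by simp [sub_pos.2 hl, sub_pos.2 hu], ?_⟩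
  intro z hz hzδ
  rw [abs_sub_lt_iff] at hzδ
  have hzl : l < z := by have := hzδ.2.trans_le (min_le_left _ _); linarith
  have hzu : z < u := by have := hzδ.1.trans_le (min_le_right _ _); linarith
  rcases lt_or_gt_of_ne hz with hlt | hgt
  · -- z < y0 : use left limit fl y0
    have hfz : |f z - fl y0| ≤ c := hLc z ⟨hzl, hlt⟩
    have hfl : |fl z - fl y0| ≤ c := by
      have := lim_close (hreg z).1 (Filter.eventually_of_mem
        (Ioo_mem_nhdsLT hzl)
        (fun w hw => hLc w ⟨hw.1, hw.2.trans hlt⟩))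
      exact this
    have hfr : |fr z - fl y0| ≤ c := by
      have := lim_close (hreg z).2 (Filter.eventually_of_mem
        (Ioo_mem_nhdsGT hlt)
        (fun w hw => hLc w ⟨hzl.trans hw.1, hw.2⟩))
      exact this
    constructor
    · calc |f z - fl z| ≤ |f z - fl y0| + |fl y0 - fl z| := abs_sub_le _ _ _
        _ ≤ c + c := add_le_add hfz (by rwa [abs_sub_comm])
        _ = 2 * c := by ring
    · calc |f z - fr z| ≤ |f z - fl y0| + |fl y0 - fr z| := abs_sub_le _ _ _
        _ ≤ c + c := add_le_add hfz (by rwa [abs_sub_comm])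
        _ = 2 * c := by ring
  · -- y0 < z : use right limit fr y0
    have hfz : |f z - fr y0| ≤ c := hRc z ⟨hgt, hzu⟩
    have hfl : |fl z - fr y0| ≤ c :=
      lim_close (hreg z).1 (Filter.eventually_of_mem
        (Ioo_mem_nhdsLT hgt)
        (fun w hw => hRc w ⟨hw.1, hw.2.trans hzu⟩))
    have hfr : |fr z - fr y0| ≤ c :=
      lim_close (hreg z).2 (Filter.eventually_of_mem
        (Ioo_mem_nhdsGT hzu)
        (fun w hw => hRc w ⟨hgt.trans hw.1, hw.2⟩))
    constructor
    · calc |f z - fl z| ≤ |f z - fr y0| + |fr y0 - fl z| := abs_sub_le _ _ _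
        _ ≤ c + c := add_le_add hfz (by rwa [abs_sub_comm])
        _ = 2 * c := by ring
    · calc |f z - fr z| ≤ |f z - fr y0| + |fr y0 - fr z| := abs_sub_le _ _ _
        _ ≤ c + c := add_le_add hfz (by rwa [abs_sub_comm])
        _ = 2 * c := by ring

lemma regulated_aemeasurable (f fl fr : ℝ → ℝ) (hreg : Regulated f fl fr) :
    AEMeasurable f (volume : Measure ℝ) := by
  classical
  set D : Set ℝ := {y | ¬ (f y = fl y ∧ f y = fr y)} with hD
  have hDcnt : D.Countable := by
    have hsub : D ⊆ ⋃ n : ℕ, {y : ℝ | 1 / (n + 1 : ℝ) ≤ max |f y - fl y| |f y - fr y|} := by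
      intro y hy
      have hpos : 0 < max |f y - fl y| |f y - fr y| := by
        by_contra h
        push_neg at h
        have h1 : |f y - fl y| ≤ 0 := le_trans (le_max_left _ _) h
        have h2 : |f y - fr y| ≤ 0 := le_trans (le_max_right _ _) h
        exact hy ⟨by have := abs_nonpos_iff.1 h1; linarith,
          by have := abs_nonpos_iff.1 h2; linarith⟩
      obtain ⟨n, hn⟩ := exists_nat_one_div_lt hpos
      exact Set.mem_iUnion.2 ⟨n, hn.le⟩
    refine Set.Countable.mono hsub (Set.countable_iUnion fun n => ?_)
    apply countable_isolated
    intro x hx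
    obtain ⟨δ, hδ, hjump⟩ := jump_small f fl fr hreg (1 / (4 * (n + 1 : ℝ)))
      (by positivity) x
    refine ⟨δ, hδ, fun y hy hyx => ?_⟩
    by_contra hne
    obtain ⟨h1, h2⟩ := hjump y hne hyx
    have hle : max |f y - fl y| |f y - fr y| ≤ 2 * (1 / (4 * (n + 1 : ℝ))) :=
      max_le h1 h2
    have : (1 : ℝ) / (n + 1) ≤ 1 / (2 * (n + 1)) := by
      refine le_trans hy (le_trans hle (le_of_eq ?_))
      field_simp
      ring
    have hn1 : (0 : ℝ) < n + 1 := by positivity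
    rw [div_le_div_iff₀ hn1 (by positivity)] at this
    nlinarith
  have hcont : ∀ y ∈ Dᶜ, ContinuousWithinAt f Dᶜ y := by
    intro y hy
    simp only [hD, Set.mem_compl_iff, Set.mem_setOf_eq, not_not] at hy
    have hT : Tendsto f (𝓝 y) (𝓝 (f y)) := by
      rw [← nhdsNE_sup_pure, ← nhdsLT_sup_nhdsGT]
      refine Tendsto.sup (Tendsto.sup ?_ ?_) ?_
      · rw [hy.1]; exact (hreg y).1
      · rw [hy.2]; exact (hreg y).2
      · exact tendsto_pure_nhds f y
    exact (hT.mono_left nhdsWithin_le_nhds : ContinuousWithinAt f Dᶜ y)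
  have hDm : MeasurableSet D := hDcnt.measurableSet
  have hae : AEMeasurable f ((volume : Measure ℝ).restrict Dᶜ) :=
    ContinuousOn.aemeasurable hcont hDm.compl
  have hzero : volume D = 0 := Set.Countable.measure_zero hDcnt volume
  have hres : (volume : Measure ℝ).restrict Dᶜ = volume := by
    rw [Measure.restrict_eq_self_of_ae_mem]
    exact (measure_eq_zero_iff_ae_notMem (μ := volume) (s := D)).1 hzero
  rwa [hres] at hae

lemma pos_ae {g : ℝ → ℝ} (hg : AEMeasurable g (volume : Measure ℝ)) (s : Set ℝ)
    (h : ∫⁻ y in s, (ENNReal.ofReal (max (g y) 0))⁻¹ < ⊤) :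
    ∀ᵐ y ∂((volume : Measure ℝ).restrict s), 0 < g y := by
  have hm : AEMeasurable (fun y => (ENNReal.ofReal (max (g y) 0))⁻¹)
      ((volume : Measure ℝ).restrict s) := by
    exact (((hg.restrict.max aemeasurable_const).ennreal_ofReal).inv)
  have := ae_lt_top' hm h.ne
  filter_upwards [this] with y hy
  rw [ENNReal.inv_lt_top, ENNReal.ofReal_pos, lt_max_iff] at hy
  rcases hy with h | h
  · exact h
  · exact absurd h (lt_irrefl 0)

lemma not_both (f : ℝ → ℝ) (hf : AEMeasurable f (volume : Measure ℝ)) (a b : ℝ) (hab : a < b)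
    (h1 : ∫⁻ y in Set.Ioo a b, (ENNReal.ofReal (max (f y) 0))⁻¹ < ⊤)
    (h2 : ∫⁻ y in Set.Ioo a b, (ENNReal.ofReal (max (-(f y)) 0))⁻¹ < ⊤) : False := by
  have hp := pos_ae hf _ h1
  have hn := pos_ae hf.neg _ h2
  haveI : (ae ((volume : Measure ℝ).restrict (Set.Ioo a b))).NeBot := by
    rw [ae_neBot, Ne, Measure.restrict_eq_zero, Real.volume_Ioo]
    rw [ENNReal.ofReal_eq_zero, not_le]
    linarith
  obtain ⟨y, hy1, hy2⟩ := (hp.and hn).exists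
  have hy2' : 0 < -f y := hy2
  linarith

/-- The set `Ω* = R⁻ ∩ R⁺` consists of isolated points, and hence is countable. -/
theorem omega_star_isolated_and_countable
    (f : ℝ → ℝ) (M : ℝ) (hb : ∀ y : ℝ, |f y| ≤ M)
    (fl fr : ℝ → ℝ) (hreg : Regulated f fl fr) (hnj : NoJamming f fl fr) :
    (∀ x ∈ Rminus f ∩ Rplus f, ∃ ε : ℝ, 0 < ε ∧
      ∀ y ∈ Set.Ioo (x - ε) (x + ε), y ∈ Rminus f ∩ Rplus f → y = x) ∧
    (Rminus f ∩ Rplus f).Countable := by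
  have hmeas : AEMeasurable f (volume : Measure ℝ) := regulated_aemeasurable f fl fr hreg
  have key : ∀ x ∈ Rminus f ∩ Rplus f, ∃ ε : ℝ, 0 < ε ∧
      ∀ y ∈ Set.Ioo (x - ε) (x + ε), y ∈ Rminus f ∩ Rplus f → y = x := by
    rintro x ⟨⟨ε₁, hε₁, hI₁⟩, ⟨ε₂, hε₂, hI₂⟩⟩
    refine ⟨min ε₁ ε₂, lt_min hε₁ hε₂, ?_⟩
    rintro y ⟨hy1, hy2⟩ ⟨⟨δ₁, hδ₁, hJ₁⟩, ⟨δ₂, hδ₂, hJ₂⟩⟩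
    have hyx1 : x - ε₁ < y := by
      have := min_le_left ε₁ ε₂; linarith
    have hyx2 : y < x + ε₂ := by
      have := min_le_right ε₁ ε₂; linarith
    by_contra hne
    rcases lt_or_gt_of_ne hne with hlt | hgt
    · -- y < x
      have hab : max (x - ε₁) y < min x (y + δ₂) := by
        apply max_lt <;> apply lt_min <;> linarith
      refine not_both f hmeas _ _ hab ?_ ?_
      · refine lt_of_le_of_lt (lintegral_mono_set ?_) hJ₂
        rintro z ⟨hz1, hz2⟩
        rw [max_lt_iff] at hz1; rw [lt_min_iff] at hz2
        exact ⟨hz1.2, hz2.2.le⟩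
      · refine lt_of_le_of_lt (lintegral_mono_set ?_) hI₁
        rintro z ⟨hz1, hz2⟩
        rw [max_lt_iff] at hz1; rw [lt_min_iff] at hz2
        exact ⟨hz1.1.le, hz2.1⟩
    · -- x < y
      have hab : max x (y - δ₁) < y := by
        apply max_lt <;> linarith
      refine not_both f hmeas _ _ hab ?_ ?_
      · refine lt_of_le_of_lt (lintegral_mono_set ?_) hI₂
        rintro z ⟨hz1, hz2⟩
        rw [max_lt_iff] at hz1
        exact ⟨hz1.1, by linarith⟩
      · refine lt_of_le_of_lt (lintegral_mono_set ?_) hJ₁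
        rintro z ⟨hz1, hz2⟩
        rw [max_lt_iff] at hz1
        exact ⟨hz1.2.le, hz2⟩
  refine ⟨key, ?_⟩
  apply countable_isolated
  intro x hx
  obtain ⟨ε, hε, h⟩ := key x hx
  refine ⟨ε, hε, fun y hy hyx => ?_⟩
  rw [abs_sub_lt_iff] at hyx
  exact h y ⟨by linarith [hyx.2], by linarith [hyx.1]⟩ hy
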